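/- For every integer n ≥ 2, the algebra D_{n+1} satisfies: tr(R_X) = 0 for every fundamental object X, while there exists a fundamental object X with tr(R_X ∘ R_X) ≠ 0. (Hence the (1,1)-invariant of D_{n+1} equals 0.) -/

import Mathlib

open Function Submodule

/-! Common framework: `V = ℂ^{n+1}`, `n`-ary multiplications as functions
`(Fin n → V) → V`, the action of `GL(V)` on them, orbits, and the
(n+1)-dimensional n-ary Filippov algebras of Kaygorodov–Volkov, each described
as an alternating `n`-linear map by its values on the increasing tuples of
distinct standard basis vectors (0-indexed: `bt n j` is the tuple omitting `e j`). -/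

/-- The underlying space `V = ℂ^{n+1}`. -/
abbrev nV (n : ℕ) : Type := Fin (n + 1) → ℂ

/-- The `j`-th standard basis vector of `V` (0-indexed). -/
def sb (n : ℕ) (j : Fin (n + 1)) : nV n := Pi.single j 1

/-- The increasing `n`-tuple of standard basis vectors omitting `e j`. -/
def bt (n : ℕ) (j : Fin (n + 1)) : Fin n → nV n := fun k => sb n (j.succAbove k)

/-- The action of `GL(V)` (invertible linear maps) on `n`-ary multiplications:
`(g • μ)(x₁, …, xₙ) = g (μ (g⁻¹ x₁, …, g⁻¹ xₙ))`. -/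
noncomputable def glAct (n : ℕ) (g : nV n ≃ₗ[ℂ] nV n) (μ : (Fin n → nV n) → nV n) :
    (Fin n → nV n) → nV n :=
  fun x => g (μ fun i => g.symm (x i))

/-- The `GL(V)`-orbit of an `n`-ary multiplication. -/
def glOrbit (n : ℕ) (μ : (Fin n → nV n) → nV n) : Set ((Fin n → nV n) → nV n) :=
  {ν | ∃ g : nV n ≃ₗ[ℂ] nV n, ν = glAct n g μ}

/-- The algebra `B`: `[e₂, …, e_{n+1}] = e₁` (0-indexed: the tuple omitting `e 0`
maps to `e 0`), all other increasing basis products zero. -/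
def IsB (n : ℕ) (μ : AlternatingMap ℂ (nV n) (nV n) (Fin n)) : Prop :=
  μ (bt n 0) = sb n 0 ∧ ∀ j : Fin (n + 1), j ≠ 0 → μ (bt n j) = 0

/-- The algebra `C₁`: `[e₂, …, e_{n+1}] = e₁`, `[e₁, e₃, …, e_{n+1}] = e₂`. -/
def IsC1 (n : ℕ) (μ : AlternatingMap ℂ (nV n) (nV n) (Fin n)) : Prop :=
  μ (bt n 0) = sb n 0 ∧ μ (bt n 1) = sb n 1 ∧
    ∀ j : Fin (n + 1), j ≠ 0 → j ≠ 1 → μ (bt n j) = 0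

/-- The algebra `C₂(α)`: `[e₂, …, e_{n+1}] = α e₁ + e₂`, `[e₁, e₃, …, e_{n+1}] = e₂`. -/
def IsC2 (n : ℕ) (α : ℂ) (μ : AlternatingMap ℂ (nV n) (nV n) (Fin n)) : Prop :=
  μ (bt n 0) = α • sb n 0 + sb n 1 ∧ μ (bt n 1) = sb n 1 ∧
    ∀ j : Fin (n + 1), j ≠ 0 → j ≠ 1 → μ (bt n j) = 0

/-- The algebra `C₃`: `[e₁, e₃, …, e_{n+1}] = e₁`, `[e₂, e₃, …, e_{n+1}] = e₂`. -/
def IsC3 (n : ℕ) (μ : AlternatingMap ℂ (nV n) (nV n) (Fin n)) : Prop :=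
  μ (bt n 1) = sb n 0 ∧ μ (bt n 0) = sb n 1 ∧
    ∀ j : Fin (n + 1), j ≠ 0 → j ≠ 1 → μ (bt n j) = 0

/-- The algebra `D_r`: `[e₁, …, e_{i-1}, e_{i+1}, …, e_{n+1}] = e_i` for `1 ≤ i ≤ r`
(0-indexed: the tuple omitting `e j` maps to `e j` for `j < r` and to `0` otherwise). -/
def IsD (n r : ℕ) (μ : AlternatingMap ℂ (nV n) (nV n) (Fin n)) : Prop :=
  ∀ j : Fin (n + 1), ((j : ℕ) < r → μ (bt n j) = sb n j) ∧ (r ≤ (j : ℕ) → μ (bt n j) = 0)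


section AuxD

/-- Key vanishing lemma: for `μ = D_{n+1}`, the `w 0`-coordinate of the value of `μ`
on a tuple of basis vectors indexed by `w` is always zero. -/
lemma key_vanish (m : ℕ) (μ : AlternatingMap ℂ (nV (m + 1)) (nV (m + 1)) (Fin (m + 1)))
    (hμ : IsD (m + 1) (m + 2) μ) (w : Fin (m + 1) → Fin (m + 2)) :
    μ (fun k => sb (m + 1) (w k)) (w 0) = 0 := by
  by_cases hw : Function.Injective w
  · have hns : ¬ Function.Surjective w := by
      intro hs
      have := Fintype.card_le_of_surjective w hs
      simp at this
    unfold Function.Surjective at hns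
    push_neg at hns
    obtain ⟨a, ha'⟩ := hns
    choose σf hσf using fun k => Fin.exists_succAbove_eq (ha' k)
    have hσinj : Function.Injective σf := by
      intro k l hkl
      apply hw
      rw [← hσf k, ← hσf l, hkl]
    let σ : Equiv.Perm (Fin (m + 1)) :=
      Equiv.ofBijective σf ((Finite.injective_iff_bijective).mp hσinj)
    have htup : (fun k => sb (m + 1) (w k)) = (bt (m + 1) a) ∘ σ := by
      funext k
      simp only [Function.comp_apply, bt, σ, Equiv.ofBijective_apply]
      rw [hσf k]
    rw [htup, μ.map_perm, (hμ a).1 a.isLt]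
    have : sb (m + 1) a (w 0) = 0 := by
      simp [sb, Pi.single_eq_of_ne (ha' 0)]
    simp [this]
  · have hni : ¬ Function.Injective (fun k => sb (m + 1) (w k)) := by
      intro h
      exact hw (fun a b hab => h (by simp [hab]))
    rw [μ.map_eq_zero_of_not_injective _ hni]
    rfl

/-- Trace via the standard basis. -/
lemma trace_pi (N : ℕ) (f : (Fin N → ℂ) →ₗ[ℂ] (Fin N → ℂ)) :
    LinearMap.trace ℂ (Fin N → ℂ) f = ∑ i : Fin N, f (Pi.single i 1) i := by
  rw [LinearMap.trace_eq_matrix_trace ℂ (Pi.basisFun ℂ (Fin N)),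
    LinearMap.toMatrix_eq_toMatrix', Matrix.trace]
  refine Finset.sum_congr rfl (fun i _ => ?_)
  rw [Matrix.diag_apply, LinearMap.toMatrix'_apply]

end AuxD

/-- For every integer `n = m + 1 ≥ 2`, the algebra `D_{n+1}` satisfies:
`tr(R_X) = 0` for every fundamental object `X`, while there is a fundamental object `X`
with `tr(R_X ∘ R_X) ≠ 0`.  (Hence the `(1,1)`-invariant of `D_{n+1}` equals `0`.) -/
theorem Dn1_trace_invariant (m : ℕ) (hm : 1 ≤ m)
    (μ : AlternatingMap ℂ (nV (m + 1)) (nV (m + 1)) (Fin (m + 1)))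
    (hμ : IsD (m + 1) (m + 2) μ) :
    (∀ (X : Fin m → nV (m + 1)) (RX : nV (m + 1) →ₗ[ℂ] nV (m + 1)),
        (∀ z : nV (m + 1), RX z = μ (Fin.cons z X)) →
        LinearMap.trace ℂ (nV (m + 1)) RX = 0) ∧
      ∃ (X : Fin m → nV (m + 1)) (RX : nV (m + 1) →ₗ[ℂ] nV (m + 1)),
        (∀ z : nV (m + 1), RX z = μ (Fin.cons z X)) ∧
        LinearMap.trace ℂ (nV (m + 1)) (RX ∘ₗ RX) ≠ 0 := by
  constructor
  · -- Part 1: trace of every R_X is zero.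
    intro X RX hRX
    set F : MultilinearMap ℂ (fun _ : Fin m => nV (m + 1)) ℂ :=
      ∑ j : Fin (m + 2), (LinearMap.proj j).compMultilinearMap
        (μ.toMultilinearMap.curryLeft (sb (m + 1) j)) with hF
    have hF0 : F = 0 := by
      apply Module.Basis.ext_multilinear (fun _ => Pi.basisFun ℂ (Fin (m + 2)))
      intro v
      rw [hF]
      simp only [MultilinearMap.sum_apply, LinearMap.compMultilinearMap_apply,
        MultilinearMap.curryLeft_apply, AlternatingMap.coe_multilinearMap,
        LinearMap.proj_apply, MultilinearMap.zero_apply, Pi.basisFun_apply]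
      refine Finset.sum_eq_zero (fun j _ => ?_)
      have hc : (Fin.cons (sb (m + 1) j) (fun i => Pi.single (v i) (1:ℂ)) :
          Fin (m + 1) → nV (m + 1)) =
          fun k => sb (m + 1) ((Fin.cons j v : Fin (m + 1) → Fin (m + 2)) k) := by
        funext k
        refine Fin.cases ?_ (fun k => ?_) k <;> simp [sb]
      rw [hc]
      exact key_vanish m μ hμ (Fin.cons j v)
    have hFX : F X = 0 := by rw [hF0]; rfl
    rw [trace_pi (m + 2) RX, ← hFX, hF]
    simp only [MultilinearMap.sum_apply, LinearMap.compMultilinearMap_apply,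
      MultilinearMap.curryLeft_apply, AlternatingMap.coe_multilinearMap,
      LinearMap.proj_apply]
    refine Finset.sum_congr rfl (fun j _ => ?_)
    rw [hRX]
    rfl
  · -- Part 2: a fundamental object with tr(R_X ∘ R_X) = 2 ≠ 0.
    set X : Fin m → nV (m + 1) := fun i => sb (m + 1) i.succ.succ with hX
    have hupd : ∀ z : nV (m + 1), Fin.cons z X = Function.update (Fin.cons (0 : nV (m + 1)) X : Fin (m + 1) → nV (m + 1)) 0 z := by
      intro z
      rw [Fin.update_cons_zero]
    let RX : nV (m + 1) →ₗ[ℂ] nV (m + 1) :=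
      { toFun := fun z => μ (Fin.cons z X)
        map_add' := by
          intro a b
          rw [hupd (a + b), hupd a, hupd b]
          exact μ.toMultilinearMap.map_update_add _ 0 a b
        map_smul' := by
          intro c a
          rw [hupd (c • a), hupd a]
          exact μ.toMultilinearMap.map_update_smul _ 0 c a }
    have hRX : ∀ z, RX z = μ (Fin.cons z X) := fun z => rfl
    refine ⟨X, RX, hRX, ?_⟩
    have h0 : Fin.cons (sb (m + 1) 0) X = bt (m + 1) 1 := by
      funext k
      refine Fin.cases ?_ (fun k => ?_) k
      · simp [bt, Fin.one_succAbove_zero]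
      · simp [bt, X, Fin.one_succAbove_succ]
    have h1 : Fin.cons (sb (m + 1) 1) X = bt (m + 1) 0 := by
      funext k
      refine Fin.cases ?_ (fun k => ?_) k
      · simp [bt, Fin.zero_succAbove, Fin.succ_zero_eq_one]
      · simp [bt, X, Fin.zero_succAbove]
    have hv0 : RX (sb (m + 1) 0) = sb (m + 1) 1 := by
      rw [hRX, h0]
      exact (hμ 1).1 (1 : Fin (m + 2)).isLt
    have hv1 : RX (sb (m + 1) 1) = sb (m + 1) 0 := by
      rw [hRX, h1]
      exact (hμ 0).1 (0 : Fin (m + 2)).isLt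
    have hz : ∀ i : Fin m, RX (sb (m + 1) i.succ.succ) = 0 := by
      intro i
      rw [hRX]
      refine μ.map_eq_zero_of_eq _ (i := 0) (j := i.succ) ?_ (Ne.symm (Fin.succ_ne_zero i))
      simp [X]
    rw [trace_pi (m + 2) (RX ∘ₗ RX)]
    have hsingle : ∀ i : Fin (m + 2), (Pi.single i 1 : Fin (m + 2) → ℂ) = sb (m + 1) i :=
      fun i => rfl
    rw [Fin.sum_univ_succ, Fin.sum_univ_succ]
    simp only [hsingle, LinearMap.comp_apply, Fin.succ_zero_eq_one, hv0, hv1]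
    have hsum : ∀ i : Fin m,
        (RX (RX (sb (m + 1) i.succ.succ))) (i.succ.succ) = 0 := by
      intro i
      rw [hz i, map_zero]
      rfl
    simp only [hsum, Finset.sum_const_zero, add_zero]
    simp [sb, Pi.single_eq_same]
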